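/- Let V be a finite-dimensional complex vector space and θ₁, θ₂ : V × V → V* two cyclic symmetric non-degenerate bilinear maps, and let J₁ and J₂ be the corresponding T*-extensions of V, i.e. V ⊕ V* with products (x+f)(y+g) = θᵢ(x,y) and common bilinear form B(x+f, y+g) = f(y) + g(x). Then there exists an i-isomorphism between J₁ and J₂ (a bijective ℂ-linear map A with A(ab) = A(a)A(b) and B(A(a),A(b)) = B(a,b) for all a,b) if and only if there exists a linear automorphism A₁ of V such that θ₁(x,y) = θ₂(A₁(x),A₁(y)) ∘ A₁ for all x,y ∈ V. -/

import Mathlib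

/-- Two T*-extensions of V by θ₁ and θ₂ are i-isomorphic if and only if
there is a linear automorphism A₁ of V with θ₁(x,y) = θ₂(A₁x, A₁y) ∘ A₁ for all x,y. -/
theorem stmt9
    {V : Type*} [AddCommGroup V] [Module ℂ V] [FiniteDimensional ℂ V]
    (θ₁ θ₂ : V →ₗ[ℂ] V →ₗ[ℂ] Module.Dual ℂ V)
    (hsym₁ : ∀ x y : V, θ₁ x y = θ₁ y x)
    (hcyc₁ : ∀ x y z : V, θ₁ x y z = θ₁ y z x)
    (hnd₁ : ∀ x : V, (∀ y : V, θ₁ x y = 0) → x = 0)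
    (hsym₂ : ∀ x y : V, θ₂ x y = θ₂ y x)
    (hcyc₂ : ∀ x y z : V, θ₂ x y z = θ₂ y z x)
    (hnd₂ : ∀ x : V, (∀ y : V, θ₂ x y = 0) → x = 0)
    (prod₁ prod₂ : V × Module.Dual ℂ V → V × Module.Dual ℂ V → V × Module.Dual ℂ V)
    (hprod₁ : ∀ a b : V × Module.Dual ℂ V, prod₁ a b = (0, θ₁ a.1 b.1))
    (hprod₂ : ∀ a b : V × Module.Dual ℂ V, prod₂ a b = (0, θ₂ a.1 b.1))
    (B : V × Module.Dual ℂ V → V × Module.Dual ℂ V → ℂ)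
    (hB : ∀ a b : V × Module.Dual ℂ V, B a b = a.2 b.1 + b.2 a.1) :
    (∃ A : (V × Module.Dual ℂ V) ≃ₗ[ℂ] V × Module.Dual ℂ V,
      (∀ a b : V × Module.Dual ℂ V, A (prod₁ a b) = prod₂ (A a) (A b)) ∧
      (∀ a b : V × Module.Dual ℂ V, B (A a) (A b) = B a b)) ↔
    (∃ A₁ : V ≃ₗ[ℂ] V, ∀ x y : V,
      θ₁ x y = (θ₂ (A₁ x) (A₁ y)).comp (A₁ : V →ₗ[ℂ] V)) := by
  constructor
  · rintro ⟨A, hA, hAB⟩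
    let A₁lin : V →ₗ[ℂ] V :=
      (LinearMap.fst ℂ V (Module.Dual ℂ V)).comp
        ((A : (V × Module.Dual ℂ V) →ₗ[ℂ] V × Module.Dual ℂ V).comp
          (LinearMap.inl ℂ V (Module.Dual ℂ V)))
    have hA₁ : ∀ x : V, A₁lin x = (A (x, 0)).1 := fun x => rfl
    have hann : ∀ f : Module.Dual ℂ V, (A ((0 : V), f)).1 = 0 := by
      intro f
      apply hnd₂
      intro y
      have h := hA ((0 : V), f) (A.symm (y, 0))
      rw [hprod₁, hprod₂] at h
      simp only [map_zero, LinearMap.zero_apply, Prod.mk.injEq,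
        LinearEquiv.apply_symm_apply] at h
      have h2 := congrArg Prod.snd h
      simpa [Prod.mk_zero_zero] using h2.symm
    have hsurj : Function.Surjective A₁lin := by
      intro v
      refine ⟨(A.symm (v, 0)).1, ?_⟩
      have hdecomp : ((v, 0) : V × Module.Dual ℂ V)
          = A ((A.symm (v, 0)).1, 0) + A (0, (A.symm (v, 0)).2) := by
        rw [← map_add]
        have : (((A.symm (v, 0)).1, (0 : Module.Dual ℂ V))
            + ((0 : V), (A.symm (v, 0)).2)) = A.symm (v, 0) := by
          ext <;> simp
        rw [this, A.apply_symm_apply]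
      have h1 := congrArg Prod.fst hdecomp
      simp only [Prod.fst_add, hann] at h1
      rw [hA₁]
      simpa using h1.symm
    have hinj : Function.Injective A₁lin :=
      (LinearMap.injective_iff_surjective).mpr hsurj
    refine ⟨LinearEquiv.ofBijective A₁lin ⟨hinj, hsurj⟩, ?_⟩
    intro x y
    have key1 : A (0, θ₁ x y) = (0, θ₂ (A₁lin x) (A₁lin y)) := by
      have h := hA (x, 0) (y, 0)
      rw [hprod₁, hprod₂] at h
      simpa [hA₁] using h
    have key2 : ∀ (g : Module.Dual ℂ V) (z : V), (A (0, g)).2 (A₁lin z) = g z := by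
      intro g z
      have h := hAB ((0 : V), g) (z, 0)
      rw [hB, hB] at h
      simp only [hann] at h
      simpa [hA₁] using h
    ext z
    have := key2 (θ₁ x y) z
    rw [key1] at this
    exact this.symm
  · rintro ⟨A₁, h⟩
    refine ⟨LinearEquiv.prodCongr A₁ A₁.symm.dualMap, ?_, ?_⟩
    · intro a b
      rw [hprod₁, hprod₂]
      ext z
      · simp
      · simp [h a.1 b.1, LinearEquiv.dualMap_apply]
    · intro a b
      rw [hB, hB]
      simp [LinearEquiv.dualMap_apply]
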